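/- Let Q, Q' ∈ ℝ^{k×N} with k ≥ 1, c ∈ ℝ^k with cᵢ > 0, n ∈ ℕ, and let x ∈ ℕ^N be a histogram with ‖x‖₁ = n. Let M(x) be the Laplace mechanism M_{Lap,c}(x, c⊙Q'). Then for every δ ∈ (0,1], M(x)( { z ∈ ℝ^k : ‖z − Qx‖_∞ ≥ n · max_{i∈[k]} ‖cᵢQ'_{i,:} − Q_{i,:}‖_∞ + ln(k/δ) · max_{i∈[k]} cᵢ } ) ≤ δ. Equivalently, with probability at least 1−δ, ‖Z − Qx‖_∞ < n max_i ‖cᵢQ'_{i,:} − Q_{i,:}‖_∞ + ln(k/δ) max_i cᵢ for Z ∼ M(x). -/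

import Mathlib

open MeasureTheory Finset

/-- Two histograms `x, x'` over a universe of size `N` are `(i,j)`-neighbors:
`‖x − x'‖₁ ≤ 2`, `xᵢ ≠ x'ᵢ` and `xⱼ ≠ x'ⱼ`. -/
def Neighbors {N : ℕ} (i j : Fin N) (x x' : Fin N → ℕ) : Prop :=
  (∑ l, |(x l : ℤ) - (x' l : ℤ)|) ≤ 2 ∧ x i ≠ x' i ∧ x j ≠ x' j

/-- `dX` is a privacy budget: nonnegative, symmetric, zero on the diagonal,
satisfying the triangle inequality. -/
def PrivacyBudget {N : ℕ} (dX : Fin N → Fin N → ℝ) : Prop :=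
  (∀ i j, 0 ≤ dX i j) ∧ (∀ i j, dX i j = dX j i) ∧ (∀ i, dX i i = 0) ∧
    (∀ i j k, dX i j ≤ dX i k + dX k j)

/-- A mechanism `M` (a map from histograms to probability measures on `Y`) is `dX`-private. -/
def DXPrivate {N : ℕ} {Y : Type*} [MeasurableSpace Y]
    (dX : Fin N → Fin N → ℝ) (M : (Fin N → ℕ) → Measure Y) : Prop :=
  ∀ i j : Fin N, i ≠ j → ∀ x x' : Fin N → ℕ, Neighbors i j x x' →
    ∀ S : Set Y, MeasurableSet S →
      M x S ≤ ENNReal.ofReal (Real.exp (dX i j)) * M x' S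

/-- The Laplace mechanism with scales `c`, centered at `a ∈ ℝ^k`. -/
noncomputable def lapMech {k : ℕ} (c a : Fin k → ℝ) : Measure (Fin k → ℝ) :=
  volume.withDensity fun z =>
    ENNReal.ofReal (∏ i, (1 / (2 * c i)) * Real.exp (-|z i - a i| / c i))


section LapAux
open Set Filter Real


lemma lapfun_integrableOn_Ioi {c : ℝ} (hc : 0 < c) (a s : ℝ) (has : a ≤ s) :
    IntegrableOn (fun t => 1 / (2 * c) * Real.exp (-|t - a| / c)) (Ioi s) := by
  refine IntegrableOn.congr_fun
    (((exp_neg_integrableOn_Ioi s (show (0:ℝ) < 1/c by positivity)).const_mul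
      (1 / (2 * c) * Real.exp (a / c)))) (fun t ht => ?_) measurableSet_Ioi
  have hta : a ≤ t := has.trans (le_of_lt ht)
  rw [abs_of_nonneg (by linarith), show -(t - a) / c = a/c + (-(1/c) * t) by ring,
    Real.exp_add]
  ring

lemma lap_setIntegral_Ioi {c : ℝ} (hc : 0 < c) (a s : ℝ) (has : a ≤ s) :
    ∫ t in Ioi s, 1 / (2 * c) * Real.exp (-|t - a| / c)
      = 1 / 2 * Real.exp (-(s - a) / c) := by
  have hderiv : ∀ t ∈ Ici s, HasDerivAt (fun t => -(1/2) * Real.exp ((a - t)/c))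
      (1 / (2 * c) * Real.exp (-|t - a| / c)) t := by
    intro t ht
    have hta : a ≤ t := has.trans ht
    have h1 : HasDerivAt (fun t : ℝ => (a - t)/c) (-1/c) t := by
      simpa using ((hasDerivAt_id t).const_sub a).div_const c
    have h2 := h1.exp.const_mul (-(1/2) : ℝ)
    refine h2.congr_deriv ?_
    rw [abs_of_nonneg (by linarith), show -(t - a)/c = (a - t)/c by ring]
    field_simp
  have htends : Tendsto (fun t : ℝ => -(1/2) * Real.exp ((a - t)/c)) atTop (nhds 0) := by
    have h3 : Tendsto (fun t : ℝ => (a - t)/c) atTop atBot := by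
      apply Tendsto.atBot_div_const hc
      exact (tendsto_atBot_add_const_left atTop a
        (tendsto_neg_atTop_atBot (G := ℝ))).congr (fun t => (sub_eq_add_neg a t).symm)
    have := (Real.tendsto_exp_atBot.comp h3).const_mul (-(1/2) : ℝ)
    simpa using this
  have := integral_Ioi_of_hasDerivAt_of_tendsto' hderiv
    (lapfun_integrableOn_Ioi hc a s has) htends
  rw [this, show -(s - a)/c = (a - s)/c by ring]
  ring

lemma lapfun_integrableOn_Iic {c : ℝ} (hc : 0 < c) (a s : ℝ) (hsa : s ≤ a) :
    IntegrableOn (fun t => 1 / (2 * c) * Real.exp (-|t - a| / c)) (Iic s) := by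
  rw [← Measure.map_neg_eq_self (volume : Measure ℝ)]
  have m : MeasurableEmbedding fun t : ℝ => -t :=
    (Homeomorph.neg ℝ).measurableEmbedding
  rw [m.integrableOn_map_iff]
  simp_rw [Function.comp_def, Set.neg_preimage, Set.neg_Iic]
  have : IntegrableOn (fun t => 1 / (2 * c) * Real.exp (-|t - (-a)| / c)) (Ici (-s)) := by
    rw [integrableOn_Ici_iff_integrableOn_Ioi]
    exact lapfun_integrableOn_Ioi hc (-a) (-s) (by linarith)
  refine this.congr_fun (fun t _ => ?_) measurableSet_Ici
  rw [show -t - a = -(t - (-a)) by ring, abs_neg]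

lemma lap_setIntegral_Iic {c : ℝ} (hc : 0 < c) (a s : ℝ) (hsa : s ≤ a) :
    ∫ t in Iic s, 1 / (2 * c) * Real.exp (-|t - a| / c)
      = 1 / 2 * Real.exp (-(a - s) / c) := by
  have h1 : ∫ t in Iic s, 1 / (2 * c) * Real.exp (-|t - a| / c)
      = ∫ t in Iic s, (fun u => 1 / (2 * c) * Real.exp (-|u - (-a)| / c)) (-t) := by
    refine setIntegral_congr_fun measurableSet_Iic (fun t _ => ?_)
    simp only
    rw [show -t - (-a) = -(t - a) by ring, abs_neg]
  rw [h1]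
  refine (integral_comp_neg_Iic s (fun u => 1 / (2 * c) * Real.exp (-|u - (-a)| / c))).trans ?_
  rw [lap_setIntegral_Ioi hc (-a) (-s) (by linarith), show -(-s - -a)/c = -(a - s)/c by ring]

lemma lapfun_integrable {c : ℝ} (hc : 0 < c) (a : ℝ) :
    Integrable (fun t => 1 / (2 * c) * Real.exp (-|t - a| / c)) := by
  rw [← integrableOn_univ, ← Set.Iic_union_Ioi (a := a)]
  exact (lapfun_integrableOn_Iic hc a a le_rfl).union (lapfun_integrableOn_Ioi hc a a le_rfl)

lemma lapfun_integral_one {c : ℝ} (hc : 0 < c) (a : ℝ) :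
    ∫ t, 1 / (2 * c) * Real.exp (-|t - a| / c) = 1 := by
  have : ∫ t, 1 / (2 * c) * Real.exp (-|t - a| / c)
      = (∫ t in Iic a, 1 / (2 * c) * Real.exp (-|t - a| / c))
        + ∫ t in Ioi a, 1 / (2 * c) * Real.exp (-|t - a| / c) := by
    rw [← setIntegral_union (Set.Iic_disjoint_Ioi le_rfl) measurableSet_Ioi
      (lapfun_integrableOn_Iic hc a a le_rfl) (lapfun_integrableOn_Ioi hc a a le_rfl),
      Set.Iic_union_Ioi, Measure.restrict_univ]
  rw [this, lap_setIntegral_Iic hc a a le_rfl, lap_setIntegral_Ioi hc a a le_rfl]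
  norm_num

lemma lap_tail {c : ℝ} (hc : 0 < c) (a T : ℝ) (hT : 0 ≤ T) :
    ∫ t, Set.indicator {t : ℝ | T ≤ |t - a|}
        (fun t => 1 / (2 * c) * Real.exp (-|t - a| / c)) t ≤ Real.exp (-T / c) := by
  set f : ℝ → ℝ := fun t => 1 / (2 * c) * Real.exp (-|t - a| / c) with hf
  have hfnn : ∀ t, 0 ≤ f t := fun t => by positivity
  have hB : MeasurableSet {t : ℝ | T ≤ |t - a|} :=
    measurableSet_le measurable_const ((measurable_id.sub measurable_const).abs)
  have key : ∀ t, Set.indicator {t : ℝ | T ≤ |t - a|} f t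
      ≤ Set.indicator (Iic (a - T)) f t + Set.indicator (Ici (a + T)) f t := by
    intro t
    by_cases ht : t ∈ {t : ℝ | T ≤ |t - a|}
    · rw [Set.indicator_of_mem ht]
      have ht' : T ≤ |t - a| := ht
      rcases le_abs.mp ht' with h | h
      · have hmem : t ∈ Ici (a + T) := by simp only [Set.mem_Ici]; linarith
        rw [Set.indicator_of_mem hmem]
        exact le_add_of_nonneg_left (Set.indicator_nonneg (fun u _ => hfnn u) t)
      · have hmem : t ∈ Iic (a - T) := by simp only [Set.mem_Iic]; linarith
        rw [Set.indicator_of_mem hmem]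
        exact le_add_of_nonneg_right (Set.indicator_nonneg (fun u _ => hfnn u) t)
    · rw [Set.indicator_of_notMem ht]
      exact add_nonneg (Set.indicator_nonneg (fun u _ => hfnn u) t)
        (Set.indicator_nonneg (fun u _ => hfnn u) t)
  have hint := lapfun_integrable hc a
  have h1 : Integrable (Set.indicator (Iic (a - T)) f) := hint.indicator measurableSet_Iic
  have h2 : Integrable (Set.indicator (Ici (a + T)) f) := hint.indicator measurableSet_Ici
  calc ∫ t, Set.indicator {t : ℝ | T ≤ |t - a|} f t
      ≤ ∫ t, (Set.indicator (Iic (a - T)) f t + Set.indicator (Ici (a + T)) f t) :=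
        integral_mono (hint.indicator hB) (h1.add h2) key
    _ = (∫ t in Iic (a - T), f t) + ∫ t in Ici (a + T), f t := by
        rw [integral_add h1 h2, integral_indicator measurableSet_Iic,
          integral_indicator measurableSet_Ici]
    _ = Real.exp (-T / c) := by
        rw [integral_Ici_eq_integral_Ioi,
          lap_setIntegral_Iic hc a (a - T) (by linarith),
          lap_setIntegral_Ioi hc a (a + T) (by linarith)]
        rw [show a - (a - T) = T by ring, show a + T - a = T by ring]
        ring

lemma lapMech_coord_bound {k : ℕ} (c a : Fin k → ℝ) (hc : ∀ i, 0 < c i) (i : Fin k)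
    (T : ℝ) (hT : 0 ≤ T) :
    lapMech c a {z | T ≤ |z i - a i|} ≤ ENNReal.ofReal (Real.exp (-T / c i)) := by
  classical
  set f : Fin k → ℝ → ℝ := fun j t => 1 / (2 * c j) * Real.exp (-|t - a j| / c j) with hf
  set B : Set ℝ := {t : ℝ | T ≤ |t - a i|} with hBdef
  have hBmeas : MeasurableSet B :=
    measurableSet_le measurable_const ((measurable_id.sub measurable_const).abs)
  set g : Fin k → ℝ → ℝ := fun j => if j = i then Set.indicator B (f i) else f j with hg
  have hS : MeasurableSet {z : Fin k → ℝ | T ≤ |z i - a i|} :=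
    measurableSet_le measurable_const (((measurable_pi_apply i).sub measurable_const).abs)
  have hfnn : ∀ j t, 0 ≤ f j t := fun j t => by
    have := (hc j); positivity
  have hgint : ∀ j, Integrable (g j) := by
    intro j
    by_cases hj : j = i
    · simp only [hg, if_pos hj]
      exact (lapfun_integrable (hc i) (a i)).indicator hBmeas
    · simp only [hg, if_neg hj]
      exact lapfun_integrable (hc j) (a j)
  have hgnn : ∀ j t, 0 ≤ g j t := by
    intro j t
    by_cases hj : j = i
    · simp only [hg, if_pos hj]
      exact Set.indicator_nonneg (fun u _ => hfnn i u) t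
    · simp only [hg, if_neg hj]
      exact hfnn j t
  rw [lapMech, withDensity_apply _ hS, ← lintegral_indicator hS]
  have heq : ∀ z : Fin k → ℝ,
      Set.indicator {z : Fin k → ℝ | T ≤ |z i - a i|}
        (fun z => ENNReal.ofReal (∏ j, (1 / (2 * c j)) * Real.exp (-|z j - a j| / c j))) z
      = ENNReal.ofReal (∏ j, g j (z j)) := by
    intro z
    by_cases hz : z ∈ {z : Fin k → ℝ | T ≤ |z i - a i|}
    · rw [Set.indicator_of_mem hz]
      congr 1
      refine Finset.prod_congr rfl (fun j _ => ?_)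
      by_cases hj : j = i
      · subst hj
        simp only [hg, if_pos rfl]
        rw [Set.indicator_of_mem (show z j ∈ B from hz)]
      · simp only [hg, if_neg hj]; rfl
    · rw [Set.indicator_of_notMem hz]
      have : ∏ j, g j (z j) = 0 :=
        Finset.prod_eq_zero (Finset.mem_univ i)
          (by simp only [hg, if_pos rfl]; exact Set.indicator_of_notMem (show z i ∉ B from hz) (f i))
      rw [this, ENNReal.ofReal_zero]
  rw [lintegral_congr heq, volume_pi, ← ofReal_integral_eq_lintegral_ofReal
    (Integrable.fintype_prod (𝕜 := ℝ) hgint)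
    (Eventually.of_forall fun z => Finset.prod_nonneg (fun j _ => hgnn j (z j)))]
  rw [integral_fintype_prod_eq_prod g]
  have hprod : (∏ j, ∫ t, g j t) = ∫ t, g i t :=
    Finset.prod_eq_single i (fun j _ hj => by
        simp only [hg, if_neg hj]; exact lapfun_integral_one (hc j) (a j))
      (fun h => absurd (Finset.mem_univ i) h)
  rw [hprod]
  refine ENNReal.ofReal_le_ofReal ?_
  simp only [hg, if_pos rfl]
  exact lap_tail (hc i) (a i) T hT

end LapAux

/-- High-probability ℓ∞ accuracy of the dX-private Laplace mechanism: for every `δ ∈ (0,1]`,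
the probability that `‖Z − Qx‖∞ ≥ n·maxᵢ ‖cᵢQ'ᵢ,: − Qᵢ,:‖∞ + ln(k/δ)·maxᵢ cᵢ` is at most `δ`. -/
theorem stmt_6 {k N : ℕ} (hk : 0 < k) (Q Q' : Matrix (Fin k) (Fin N) ℝ)
    (c : Fin k → ℝ) (hc : ∀ i, 0 < c i) (n : ℕ)
    (x : Fin N → ℕ) (hx : ∑ l, x l = n)
    (δ : ℝ) (hδ0 : 0 < δ) (hδ1 : δ ≤ 1) :
    lapMech c (fun i => c i * Q'.mulVec (fun l => (x l : ℝ)) i)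
      {z | (⨆ i, |z i - Q.mulVec (fun l => (x l : ℝ)) i|) ≥
        (n : ℝ) * (⨆ i, ‖(fun l => c i * Q' i l - Q i l)‖)
          + Real.log ((k : ℝ) / δ) * (⨆ i, c i)}
      ≤ ENNReal.ofReal δ := by
  classical
  have hne : Nonempty (Fin k) := ⟨⟨0, hk⟩⟩
  set b : Fin k → ℝ := Q.mulVec (fun l => (x l : ℝ)) with hb
  set a : Fin k → ℝ := fun i => c i * Q'.mulVec (fun l => (x l : ℝ)) i with ha
  set A : ℝ := ⨆ i, ‖(fun l => c i * Q' i l - Q i l)‖ with hA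
  set Cc : ℝ := ⨆ i, c i with hCc
  set L : ℝ := Real.log ((k : ℝ) / δ) with hL
  have hk1 : (1:ℝ) ≤ (k:ℝ) := by exact_mod_cast hk
  have hL0 : 0 ≤ L := Real.log_nonneg (by rw [le_div_iff₀ hδ0]; linarith)
  have hCle : ∀ i, c i ≤ Cc := fun i => le_ciSup (Set.Finite.bddAbove (Set.finite_range _)) i
  have hCc0 : 0 ≤ Cc := le_trans (hc ⟨0, hk⟩).le (hCle _)
  have hAle : ∀ i, ‖(fun l => c i * Q' i l - Q i l)‖ ≤ A := by
    intro i
    rw [hA]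
    exact le_ciSup (f := fun i => ‖(fun l => c i * Q' i l - Q i l)‖)
      (Set.Finite.bddAbove (Set.finite_range _)) i
  have hab : ∀ i, |a i - b i| ≤ (n:ℝ) * A := by
    intro i
    have h1 : a i - b i = ∑ l, (c i * Q' i l - Q i l) * (x l : ℝ) := by
      simp only [ha, hb, Matrix.mulVec, dotProduct]
      rw [Finset.mul_sum, ← Finset.sum_sub_distrib]
      exact Finset.sum_congr rfl fun l _ => by ring
    rw [h1]
    calc |∑ l, (c i * Q' i l - Q i l) * (x l : ℝ)|
        ≤ ∑ l, |(c i * Q' i l - Q i l) * (x l : ℝ)| := Finset.abs_sum_le_sum_abs _ _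
      _ ≤ ∑ l, ‖(fun l => c i * Q' i l - Q i l)‖ * (x l : ℝ) := by
          refine Finset.sum_le_sum fun l _ => ?_
          rw [abs_mul, Nat.abs_cast]
          refine mul_le_mul_of_nonneg_right ?_ (by positivity)
          simpa using norm_le_pi_norm (fun l => c i * Q' i l - Q i l) l
      _ = ‖(fun l => c i * Q' i l - Q i l)‖ * (n : ℝ) := by
          rw [← Finset.mul_sum]
          congr 1
          rw [← hx]
          push_cast
          rfl
      _ ≤ (n:ℝ) * A := by
          rw [mul_comm]
          exact mul_le_mul_of_nonneg_left (hAle i) (by positivity)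
  set T : ℝ := L * Cc with hT
  have hT0 : 0 ≤ T := mul_nonneg hL0 hCc0
  have hsub : {z : Fin k → ℝ | (⨆ i, |z i - b i|) ≥ (n:ℝ) * A + L * Cc}
      ⊆ ⋃ i, {z : Fin k → ℝ | T ≤ |z i - a i|} := by
    intro z hz
    obtain ⟨i₀, hi₀⟩ := exists_eq_ciSup_of_finite (f := fun i => |z i - b i|)
    have h1 : (n:ℝ) * A + L * Cc ≤ |z i₀ - b i₀| := by rw [hi₀]; exact hz
    have h2 : |z i₀ - b i₀| ≤ |z i₀ - a i₀| + |a i₀ - b i₀| := abs_sub_le _ _ _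
    refine Set.mem_iUnion.mpr ⟨i₀, ?_⟩
    simp only [Set.mem_setOf_eq, hT]
    linarith [hab i₀]
  refine le_trans (measure_mono hsub) (le_trans (measure_iUnion_le _) ?_)
  have hbound : ∀ i : Fin k,
      lapMech c a {z : Fin k → ℝ | T ≤ |z i - a i|} ≤ ENNReal.ofReal (δ / k) := by
    intro i
    refine le_trans (lapMech_coord_bound c a hc i T hT0) (ENNReal.ofReal_le_ofReal ?_)
    have h1 : L ≤ T / c i := by
      rw [le_div_iff₀ (hc i), hT]
      exact mul_le_mul_of_nonneg_left (hCle i) hL0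
    calc Real.exp (-T / c i) ≤ Real.exp (-L) := by
          apply Real.exp_le_exp.mpr
          rw [neg_div]
          linarith
      _ = δ / k := by
          rw [hL, Real.exp_neg, Real.exp_log (by positivity), inv_div]
  have hkR : (k:ℝ) ≠ 0 := by positivity
  calc ∑' i : Fin k, lapMech c a {z : Fin k → ℝ | T ≤ |z i - a i|}
      ≤ ∑' i : Fin k, ENNReal.ofReal (δ / k) := ENNReal.tsum_le_tsum hbound
    _ = (k : ENNReal) * ENNReal.ofReal (δ / k) := by
        rw [tsum_fintype]
        simp [Finset.card_univ, nsmul_eq_mul]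
    _ = ENNReal.ofReal δ := by
        rw [← ENNReal.ofReal_natCast k, ← ENNReal.ofReal_mul (by positivity)]
        congr 1
        field_simp
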